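/- arXiv:2008.11679 — 9 statements merged into one kernel-verified Lean document; each statement's English description precedes it below -/
import Mathlib

section
/- Let K be a field and G a finite subgroup of the group Aut(K) of ring automorphisms of K, with fixed subfield K^G = {x ∈ K | g(x) = x for all g ∈ G}. Then a ring automorphism h of K lies in the normalizer of G in Aut(K) if and only if h maps K^G onto K^G. -/
private theorem RingAut.mul_apply' {K : Type*} [Field K] (a b : RingAut K) (x : K) :
    (a * b) x = a (b x) := rfl

private theorem RingAut.inv_apply_apply' {K : Type*} [Field K] (h : RingAut K) (x : K) :
    h⁻¹ (h x) = x := h.symm_apply_apply x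

private theorem RingAut.apply_inv_apply' {K : Type*} [Field K] (h : RingAut K) (x : K) :
    h (h⁻¹ x) = x := h.apply_symm_apply x

private theorem mem_of_fixes {K : Type*} [Field K] (G : Subgroup (RingAut K)) [Finite G]
    (f : RingAut K) (hf : ∀ x ∈ {x : K | ∀ g ∈ G, g x = x}, f x = x) : f ∈ G := by
  have hS : ∀ x : K, x ∈ FixedPoints.subfield G K ↔ ∀ g ∈ G, g x = x := by
    intro x
    constructor
    · intro hx g hg; exact hx ⟨g, hg⟩
    · intro hx g; exact hx g g.2
  let f' : K ≃ₐ[FixedPoints.subfield G K] K :=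
    AlgEquiv.ofRingEquiv (f := f) (fun x => hf x ((hS x).mp x.2))
  obtain ⟨g, hg⟩ := FixedPoints.toAlgAut_surjective G K f'
  have : (g : RingAut K) = f := by
    ext x
    exact congrArg (fun e => (e : K ≃ₐ[FixedPoints.subfield G K] K) x) hg
  rw [← this]; exact g.2

/-- A ring automorphism `h` of a field `K` normalizes a finite subgroup
`G` of `Aut(K)` iff `h` maps the fixed subfield `K^G` onto itself. -/
theorem mem_normalizer_iff_image_fixedField_eq {K : Type*} [Field K]
    (G : Subgroup (RingAut K)) [Finite G] (h : RingAut K) :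
    h ∈ Subgroup.normalizer (G : Set (RingAut K)) ↔
      ⇑h '' {x : K | ∀ g ∈ G, g x = x} = {x : K | ∀ g ∈ G, g x = x} := by
  set S := {x : K | ∀ g ∈ G, g x = x} with hSdef
  constructor
  · intro hn
    apply Set.eq_of_subset_of_subset
    · rintro _ ⟨x, hx, rfl⟩ g hg
      have hmemG : h⁻¹ * g * h ∈ G := by
        have := (Subgroup.mem_normalizer_iff.mp (inv_mem hn) g).mp (by simpa using hg)
        simpa [mul_assoc] using this
      have := congrArg h (hx _ hmemG)
      simpa [RingAut.mul_apply', RingAut.inv_apply_apply', RingAut.apply_inv_apply']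
        using this
    · intro x hx
      refine ⟨h⁻¹ x, ?_, h.apply_symm_apply x⟩
      intro g hg
      have hg' : h * g * h⁻¹ ∈ G := (Subgroup.mem_normalizer_iff.mp hn g).mp hg
      have := congrArg (⇑h⁻¹) (hx _ hg')
      simpa [RingAut.mul_apply', RingAut.inv_apply_apply', RingAut.apply_inv_apply']
        using this
  · intro himg
    rw [Subgroup.mem_normalizer_iff]
    have hmem : ∀ x ∈ S, h⁻¹ x ∈ S := by
      intro x hx
      rw [← himg] at hx
      obtain ⟨y, hy, rfl⟩ := hx
      rw [RingAut.inv_apply_apply']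
      exact hy
    have hmem' : ∀ x ∈ S, h x ∈ S := by
      intro x hx; rw [← himg]; exact ⟨x, hx, rfl⟩
    intro g
    constructor
    · intro hg
      apply mem_of_fixes G
      intro x hx
      have h2 : g (h⁻¹ x) = h⁻¹ x := hmem x hx g hg
      show h (g (h⁻¹ x)) = x
      rw [h2, RingAut.apply_inv_apply']
    · intro hg
      have hrw : g = h⁻¹ * (h * g * h⁻¹) * h := by group
      rw [hrw]
      apply mem_of_fixes G
      intro x hx
      have h2 : (h * g * h⁻¹) (h x) = h x := hmem' x hx _ hg
      show h⁻¹ ((h * g * h⁻¹) (h x)) = x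
      rw [h2, RingAut.inv_apply_apply']
end

section
/- Let R be a commutative ring with 3 = 0, let b be a unit of R, and let c, d ∈ R with d³ = 0. Set h = b·X + c + d·X³ and h′ = b⁻¹·X + b⁻⁴·(c³d − b³c) − b⁻⁴d·X³ in R[X]. Then h.comp h′ = X and h′.comp h = X; that is, h′ is the two-sided compositional inverse of the substitution t ↦ bt + c + dt³. -/
open Polynomial

private lemma key1 {S : Type*} [CommRing S] (b u c d t : S) (h3 : (3 : S) = 0)
    (hbu : b * u = 1) (hd : d ^ 3 = 0) :
    b * (u * t + u ^ 4 * (c ^ 3 * d - b ^ 3 * c) - u ^ 4 * d * t ^ 3) + c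
      + d * (u * t + u ^ 4 * (c ^ 3 * d - b ^ 3 * c) - u ^ 4 * d * t ^ 3) ^ 3 = t := by
  linear_combination
    (-u^6*d^2*t^5 + u^6*c^3*d^2*t^2 + u^9*d^3*t^7 - 2*u^9*c^3*d^3*t^4 + u^9*c^6*d^3*t
      + u^12*c^3*d^4*t^6 - u^12*c^6*d^4*t^3 - b^3*u^6*c*d*t^2 + 2*b^3*u^9*c*d^2*t^4
      - 2*b^3*u^9*c^4*d^2*t - b^3*u^12*c*d^3*t^6 + 2*b^3*u^12*c^4*d^3*t^3
      - b^3*u^12*c^7*d^3 + b^6*u^9*c^2*d*t - b^6*u^12*c^2*d^2*t^3 + b^6*u^12*c^5*d^2) * h3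
    + (-u^12*d*t^9 + u^12*c^9*d) * hd
    + (t - c - u^3*d*t^3 - b*u*c - b*u^4*c^3*d - b^2*u^2*c - b^2*u^5*c^3*d - b^3*u^3*c
      - b^3*u^6*c^3*d - b^4*u^7*c^3*d - b^5*u^8*c^3*d - b^6*u^9*c^3*d - b^7*u^10*c^3*d
      - b^8*u^11*c^3*d) * hbu

private lemma key2 {S : Type*} [CommRing S] (b u c d t : S) (h3 : (3 : S) = 0)
    (hbu : b * u = 1) (hd : d ^ 3 = 0) :
    u * (b * t + c + d * t ^ 3) + u ^ 4 * (c ^ 3 * d - b ^ 3 * c)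
      - u ^ 4 * d * (b * t + c + d * t ^ 3) ^ 3 = t := by
  linear_combination
    (-u^4*c*d^3*t^6 - u^4*c^2*d^2*t^3 - b*u^4*d^3*t^7 - 2*b*u^4*c*d^2*t^4 - b*u^4*c^2*d*t
      - b^2*u^4*d^2*t^5 - b^2*u^4*c*d*t^2) * h3
    + (-u^4*d*t^9) * hd
    + (t - u*d*t^3 - u*c - b*u^2*d*t^3 - b*u^2*c - b^2*u^3*d*t^3 - b^2*u^3*c) * hbu

/-- In characteristic 3, the substitution `t ↦ bt + c + dt³` (with `b` a unit and
`d³ = 0`) has two-sided compositional inverse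
`t ↦ b⁻¹t + b⁻⁴(c³d − b³c) − b⁻⁴d t³`. -/
theorem comp_inverse_char_three {R : Type*} [CommRing R] (h3 : (3 : R) = 0)
    (b : Rˣ) (c d : R) (hd : d ^ 3 = 0) :
    let bi : R := ((b⁻¹ : Rˣ) : R)
    let h : R[X] := C (b : R) * X + C c + C d * X ^ 3
    let h' : R[X] := C bi * X + C (bi ^ 4 * (c ^ 3 * d - (b : R) ^ 3 * c))
      - C (bi ^ 4 * d) * X ^ 3
    h.comp h' = X ∧ h'.comp h = X := by
  intro bi h h'
  have h3' : (3 : R[X]) = 0 := by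
    rw [← map_ofNat (C : R →+* R[X]) 3, h3, map_zero]
  have hbu : (C ((b : R)) : R[X]) * C bi = 1 := by
    rw [← C_mul]
    simp [bi]
  have hd' : (C d : R[X]) ^ 3 = 0 := by rw [← C_pow, hd, C_0]
  constructor
  · have := key1 (C ((b : R)) : R[X]) (C bi) (C c) (C d) X h3' hbu hd'
    simp only [h, h', add_comp, sub_comp, mul_comp, C_comp, X_comp, pow_comp,
      map_mul, map_pow, map_sub]
    linear_combination this
  · have := key2 (C ((b : R)) : R[X]) (C bi) (C c) (C d) X h3' hbu hd'
    simp only [h, h', add_comp, sub_comp, mul_comp, C_comp, X_comp, pow_comp,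
      map_mul, map_pow, map_sub]
    linear_combination this
end

section
/- Let R be a commutative ring with 3 = 0, let b be a unit of R, let c, d ∈ R with d³ = 0, and let a ∈ R with a³ = 1. Set h = b·X + c + d·X³, g = a·X + (1−a)·X³, and g′ = a·X + (1−a)·b⁻¹·(c³ − c) + (1−a)·(b² − b⁻¹d)·X³ in R[X]. Then g.comp h = h.comp g′; that is, the conjugate of the μ₃-substitution g by h is g′. -/
open Polynomial

/-- In characteristic 3, the conjugate of the μ₃-substitution
`g = a·X + (1−a)·X³` (with `a³ = 1`) by `h = b·X + c + d·X³` is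
`g′ = a·X + (1−a)b⁻¹(c³ − c) + (1−a)(b² − b⁻¹d)·X³`, i.e. `g ∘ h = h ∘ g′`. -/
theorem mu3_conj_char_three {R : Type*} [CommRing R] (h3 : (3 : R) = 0)
    (b : Rˣ) (c d : R) (hd : d ^ 3 = 0) (a : R) (ha : a ^ 3 = 1) :
    let bi : R := ((b⁻¹ : Rˣ) : R)
    let h : R[X] := C (b : R) * X + C c + C d * X ^ 3
    let g : R[X] := C a * X + C (1 - a) * X ^ 3
    let g' : R[X] := C a * X + C ((1 - a) * bi * (c ^ 3 - c))
      + C ((1 - a) * ((b : R) ^ 2 - bi * d)) * X ^ 3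
    g.comp h = h.comp g' := by
  intro bi h g g'
  have h30 : (3 : R[X]) = 0 := by
    rw [← map_ofNat (C : R →+* R[X]) 3, h3, map_zero]
  have cube : ∀ x y : R[X], (x + y) ^ 3 = x ^ 3 + y ^ 3 := fun x y => by
    have e : (x + y) ^ 3 = x ^ 3 + y ^ 3 + 3 * (x ^ 2 * y + x * y ^ 2) := by ring
    rw [e, h30]; ring
  have ha1 : (1 - a) ^ 3 = 0 := by
    have e : (1 - a) ^ 3 = 1 - a ^ 3 - 3 * (a - a ^ 2) := by ring
    rw [e, ha, h3]; ring
  have hC : C (b : R) * C bi = 1 := by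
    rw [← map_mul, Units.mul_inv, map_one]
  have hh3 : h ^ 3 = C (b : R) ^ 3 * X ^ 3 + C c ^ 3 := by
    show (C (b : R) * X + C c + C d * X ^ 3) ^ 3 = _
    rw [cube, cube]
    have : (C d * X ^ 3) ^ 3 = C (d ^ 3) * X ^ 9 := by rw [map_pow]; ring
    rw [this, hd, map_zero]; ring
  have hg3 : g' ^ 3 = X ^ 3 := by
    show (C a * X + C ((1 - a) * bi * (c ^ 3 - c))
      + C ((1 - a) * ((b : R) ^ 2 - bi * d)) * X ^ 3) ^ 3 = _
    rw [cube, cube]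
    have e1 : (C a * X) ^ 3 = X ^ 3 := by
      rw [mul_pow, ← map_pow, ha, map_one, one_mul]
    have e2 : C ((1 - a) * bi * (c ^ 3 - c)) ^ 3 = 0 := by
      rw [← map_pow, show ((1 - a) * bi * (c ^ 3 - c)) ^ 3 = 0 from by
        rw [mul_pow, mul_pow, ha1]; ring, map_zero]
    have e3 : (C ((1 - a) * ((b : R) ^ 2 - bi * d)) * X ^ 3) ^ 3 = 0 := by
      rw [mul_pow, ← map_pow, show ((1 - a) * ((b : R) ^ 2 - bi * d)) ^ 3 = 0 from by
        rw [mul_pow, ha1]; ring, map_zero, zero_mul]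
    rw [e1, e2, e3]; ring
  show g.comp h = h.comp g'
  have L : g.comp h = C a * h + C (1 - a) * h ^ 3 := by
    simp [g, add_comp, mul_comp, C_comp, X_comp, pow_comp]
  have Rr : h.comp g' = C (b : R) * g' + C c + C d * g' ^ 3 := by
    simp [h, add_comp, mul_comp, C_comp, X_comp, pow_comp]
  rw [L, Rr, hh3, hg3]
  show C a * (C (b : R) * X + C c + C d * X ^ 3) + C (1 - a) * (C (b : R) ^ 3 * X ^ 3 + C c ^ 3)
    = C (b : R) * (C a * X + C ((1 - a) * bi * (c ^ 3 - c))
      + C ((1 - a) * ((b : R) ^ 2 - bi * d)) * X ^ 3) + C c + C d * X ^ 3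
  simp only [map_mul, map_sub, map_pow, map_one]
  linear_combination ((1 - C a) * (C d * X ^ 3 - ((C c) ^ 3 - C c))) * hC
end

section
/- Let R be a commutative ring with 3 = 0, let b be a unit of R, let c, d ∈ R with d³ = 0, and let a ∈ R with a³ = 0. Set h = b·X + c + d·X³, g = X + a·X³, and g′ = X + a·b⁻¹·c³ + a·b²·X³ in R[X]. Then g.comp h = h.comp g′; that is, the conjugate of the α₃-substitution g by h is g′. -/
open Polynomial

/-- Generic algebraic identity behind the conjugation formula. -/
lemma alpha3_conj_aux {S : Type*} [CommRing S] (h3 : (3 : S) = 0)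
    (b bi c d a x : S) (hb : b * bi = 1) (hd : d ^ 3 = 0) (ha : a ^ 3 = 0) :
    (b * x + c + d * x ^ 3) + a * (b * x + c + d * x ^ 3) ^ 3 =
      b * (x + a * bi * c ^ 3 + a * b ^ 2 * x ^ 3) + c +
        d * (x + a * bi * c ^ 3 + a * b ^ 2 * x ^ 3) ^ 3 := by
  linear_combination (a * x ^ 9) * hd + (-(d * (bi ^ 3 * c ^ 9 + b ^ 6 * x ^ 9))) * ha +
    (-(a * c ^ 3)) * hb +
    (a * (b ^ 2 * c * x ^ 2 + b ^ 2 * d * x ^ 5 + b * c ^ 2 * x + c ^ 2 * d * x ^ 3 +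
        b * d ^ 2 * x ^ 7 + c * d ^ 2 * x ^ 6 + 2 * b * c * d * x ^ 4) -
      d * (x ^ 2 * (a * bi * c ^ 3) + (a * b ^ 2) * x ^ 5 + x * (a * bi * c ^ 3) ^ 2 +
        (a * bi * c ^ 3) ^ 2 * (a * b ^ 2) * x ^ 3 + (a * b ^ 2) ^ 2 * x ^ 7 +
        (a * bi * c ^ 3) * (a * b ^ 2) ^ 2 * x ^ 6 +
        2 * (a * bi * c ^ 3) * (a * b ^ 2) * x ^ 4)) * h3

/-- In characteristic 3, the conjugate of the α₃-substitution
`g = X + a·X³` (with `a³ = 0`) by `h = b·X + c + d·X³` is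
`g′ = X + ab⁻¹c³ + ab²·X³`, i.e. `g ∘ h = h ∘ g′`. -/
theorem alpha3_conj_char_three {R : Type*} [CommRing R] (h3 : (3 : R) = 0)
    (b : Rˣ) (c d : R) (hd : d ^ 3 = 0) (a : R) (ha : a ^ 3 = 0) :
    let bi : R := ((b⁻¹ : Rˣ) : R)
    let h : R[X] := C (b : R) * X + C c + C d * X ^ 3
    let g : R[X] := X + C a * X ^ 3
    let g' : R[X] := X + C (a * bi * c ^ 3) + C (a * (b : R) ^ 2) * X ^ 3
    g.comp h = h.comp g' := by
  intro bi h g g'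
  have h3' : (3 : R[X]) = 0 := by
    rw [(map_ofNat C 3).symm, h3, C_0]
  have hb' : (C (b : R)) * (C bi) = 1 := by
    rw [← C_mul]
    simp [bi]
  have hd' : (C d) ^ 3 = 0 := by rw [← C_pow, hd, C_0]
  have ha' : (C a) ^ 3 = 0 := by rw [← C_pow, ha, C_0]
  have key := alpha3_conj_aux h3' (C (b : R)) (C bi) (C c) (C d) (C a) X hb' hd' ha'
  simp only [h, g, g', add_comp, mul_comp, X_comp, C_comp, pow_comp, C_mul, C_pow]
  linear_combination key
end

section
/- Let R be a commutative ring with 3 = 0, let b be a unit of R, and let c, d ∈ R with d³ = 0. Set h = b·X + c + d·X³, g = −X, and g′ = −X + b⁻¹c − b⁻⁴c³d in R[X]. Then g.comp h = h.comp g′; that is, conjugating the involution t ↦ −t by h yields the substitution t ↦ −t + b⁻¹c − b⁻⁴c³d. -/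
open Polynomial

/-- In characteristic 3, conjugating the involution `g : t ↦ −t` by
`h = b·X + c + d·X³` yields `g′ : t ↦ −t + b⁻¹c − b⁻⁴c³d`,
i.e. `g ∘ h = h ∘ g′`. -/
theorem involution_conj_char_three {R : Type*} [CommRing R] (h3 : (3 : R) = 0)
    (b : Rˣ) (c d : R) (hd : d ^ 3 = 0) :
    let bi : R := ((b⁻¹ : Rˣ) : R)
    let h : R[X] := C (b : R) * X + C c + C d * X ^ 3
    let g : R[X] := -X
    let g' : R[X] := -X + C (bi * c - bi ^ 4 * c ^ 3 * d)
    g.comp h = h.comp g' := by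
  intro bi h g g'
  have h3' : (3 : R[X]) = 0 := by rw [← map_ofNat C 3, h3, map_zero]
  have hd' : (C d : R[X]) ^ 3 = 0 := by rw [← map_pow, hd, map_zero]
  have hb : (C (b : R) : R[X]) * C bi = 1 := by
    rw [← map_mul, Units.mul_inv, map_one]
  simp only [h, g, g', neg_comp, X_comp, add_comp, mul_comp, C_comp, pow_comp, map_sub, map_mul, map_pow]
  set B := (C (b : R) : R[X])
  set Bi := (C bi : R[X])
  set Cc := (C c : R[X])
  set D := (C d : R[X])
  linear_combination (-Cc - D * X^2 * (Bi*Cc - Bi^4*Cc^3*D) + D * X * (Bi*Cc - Bi^4*Cc^3*D)^2 + Bi^2*Cc^2*(Bi^4*Cc^3*D)*D - Bi*Cc*(Bi^4*Cc^3*D)^2*D) * h3' + (-Cc + Bi^3*Cc^3*D) * hb + (Bi^12*Cc^9*D) * hd'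
end

section
/- Let R be a commutative ring with 2 = 0, let b be a unit of R, let c, d, e ∈ R with d⁴ = 0 and e² = 0, let λ ∈ R, and let a ∈ R with a² = 1. Set h = b·X + c + d·X² + e·X⁴, g = a·X + λ(a+1)·X² + (a+1)·X⁴, and g′ = a·X + (a+1)·b⁻¹·(c + λc² + c⁴) + (a+1)·(b⁻¹d + λb)·X² + (a+1)·(b⁻¹e + λb⁻¹d² + b³)·X⁴ in R[X]. Then g.comp h = h.comp g′; that is, the conjugate of the μ₂-substitution g by h is g′. -/
lemma mu2_aux {S : Type*} [CommRing S] (h2 : (2 : S) = 0)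
    (B Bi Cc D E L A x : S) (hBi : B * Bi = 1)
    (hd : D ^ 4 = 0) (he : E ^ 2 = 0) (ha : A ^ 2 = 1) :
    A * (B * x + Cc + D * x ^ 2 + E * x ^ 4)
      + (L * (A + 1)) * (B * x + Cc + D * x ^ 2 + E * x ^ 4) ^ 2
      + (A + 1) * (B * x + Cc + D * x ^ 2 + E * x ^ 4) ^ 4
    = B * (A * x + ((A + 1) * Bi * (Cc + L * Cc ^ 2 + Cc ^ 4))
          + ((A + 1) * (Bi * D + L * B)) * x ^ 2
          + ((A + 1) * (Bi * E + L * Bi * D ^ 2 + B ^ 3)) * x ^ 4)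
      + Cc
      + D * (A * x + ((A + 1) * Bi * (Cc + L * Cc ^ 2 + Cc ^ 4))
          + ((A + 1) * (Bi * D + L * B)) * x ^ 2
          + ((A + 1) * (Bi * E + L * Bi * D ^ 2 + B ^ 3)) * x ^ 4) ^ 2
      + E * (A * x + ((A + 1) * Bi * (Cc + L * Cc ^ 2 + Cc ^ 4))
          + ((A + 1) * (Bi * D + L * B)) * x ^ 2
          + ((A + 1) * (Bi * E + L * Bi * D ^ 2 + B ^ 3)) * x ^ 4) ^ 4 := by
  have hA1 : (A + 1) ^ 2 = 0 := by linear_combination ha + (A + 1) * h2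
  set M : S := Bi * (Cc + L * Cc ^ 2 + Cc ^ 4) + (Bi * D + L * B) * x ^ 2
      + (Bi * E + L * Bi * D ^ 2 + B ^ 3) * x ^ 4 with hM
  have hYdef : A * x + ((A + 1) * Bi * (Cc + L * Cc ^ 2 + Cc ^ 4))
      + ((A + 1) * (Bi * D + L * B)) * x ^ 2
      + ((A + 1) * (Bi * E + L * Bi * D ^ 2 + B ^ 3)) * x ^ 4
      = A * x + (A + 1) * M := by rw [hM]; ring
  rw [hYdef]
  have hY2 : (A * x + (A + 1) * M) ^ 2 = x ^ 2 := by
    linear_combination x ^ 2 * ha + (A * x * (A + 1) * M) * h2 + M ^ 2 * hA1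
  have hY4 : (A * x + (A + 1) * M) ^ 4 = x ^ 4 := by
    rw [show (4 : ℕ) = 2 * 2 from rfl, pow_mul, hY2, ← pow_mul]
  rw [hY2, hY4]
  have hH2 : (B * x + Cc + D * x ^ 2 + E * x ^ 4) ^ 2
      = B ^ 2 * x ^ 2 + Cc ^ 2 + D ^ 2 * x ^ 4 := by
    linear_combination (B * x * Cc + B * D * x ^ 3 + B * E * x ^ 5
      + Cc * D * x ^ 2 + Cc * E * x ^ 4 + D * E * x ^ 6) * h2 + x ^ 8 * he
  have hH4 : (B * x + Cc + D * x ^ 2 + E * x ^ 4) ^ 4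
      = B ^ 4 * x ^ 4 + Cc ^ 4 := by
    rw [show (4 : ℕ) = 2 * 2 from rfl, pow_mul, hH2]
    linear_combination (B ^ 2 * x ^ 2 * Cc ^ 2 + B ^ 2 * D ^ 2 * x ^ 6
      + Cc ^ 2 * D ^ 2 * x ^ 4) * h2 + x ^ 8 * hd
  rw [hH2, hH4, hM]
  linear_combination ((A + 1) * (Cc + L * Cc ^ 2 + Cc ^ 4)
      + (A + 1) * D * x ^ 2 + (A + 1) * (E + L * D ^ 2) * x ^ 4) * hBi
    - (Cc + D * x ^ 2 + E * x ^ 4) * h2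
    + ((A + 1) * (1 - B * Bi) * (Cc + L * Cc ^ 2 + Cc ^ 4 + D * x ^ 2
        + L * D ^ 2 * x ^ 4 + E * x ^ 4)) * h2

open Polynomial

/-- In characteristic 2, the conjugate of the μ₂-substitution
`g = a·X + λ(a+1)·X² + (a+1)·X⁴` (with `a² = 1`) by
`h = b·X + c + d·X² + e·X⁴` is
`g′ = a·X + (a+1)b⁻¹(c + λc² + c⁴) + (a+1)(b⁻¹d + λb)·X²
      + (a+1)(b⁻¹e + λb⁻¹d² + b³)·X⁴`, i.e. `g ∘ h = h ∘ g′`. -/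
theorem mu2_conj_char_two {R : Type*} [CommRing R] (h2 : (2 : R) = 0)
    (b : Rˣ) (c d e : R) (hd : d ^ 4 = 0) (he : e ^ 2 = 0) (l : R)
    (a : R) (ha : a ^ 2 = 1) :
    let bi : R := ((b⁻¹ : Rˣ) : R)
    let h : R[X] := C (b : R) * X + C c + C d * X ^ 2 + C e * X ^ 4
    let g : R[X] := C a * X + C (l * (a + 1)) * X ^ 2 + C (a + 1) * X ^ 4
    let g' : R[X] := C a * X + C ((a + 1) * bi * (c + l * c ^ 2 + c ^ 4))
      + C ((a + 1) * (bi * d + l * (b : R))) * X ^ 2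
      + C ((a + 1) * (bi * e + l * bi * d ^ 2 + (b : R) ^ 3)) * X ^ 4
    g.comp h = h.comp g' := by
  intro bi h g g'
  have h2' : (2 : R[X]) = 0 := by
    rw [← map_ofNat (C : R →+* R[X]) 2, h2, map_zero]
  have hBi : C (b : R) * C bi = 1 := by
    rw [← C_mul, Units.mul_inv, map_one]
  have hd' : (C d : R[X]) ^ 4 = 0 := by rw [← map_pow, hd, map_zero]
  have he' : (C e : R[X]) ^ 2 = 0 := by rw [← map_pow, he, map_zero]
  have ha' : (C a : R[X]) ^ 2 = 1 := by rw [← map_pow, ha, map_one]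
  show g.comp h = h.comp g'
  simp only [g, h, g', add_comp, mul_comp, C_comp, X_comp, pow_comp, C_mul, C_add, C_pow]
  exact mu2_aux h2' (C (b : R)) (C bi) (C c) (C d) (C e) (C l) (C a) X hBi hd' he' ha'
end

section
/- Let R be a commutative ring with 2 = 0, let b be a unit of R, let c, d, e ∈ R with d⁴ = 0 and e² = 0, and let a ∈ R with a⁴ = 1. Set h = b·X + c + d·X² + e·X⁴, g = a·X + (a+a²)·X² + (1+a²)·X⁴, and g′ = a·X + (a+1)·b⁻¹·(c + ac² + (a+1)·(b⁻²c²d + b⁻²c⁴d + c⁴)) + (a+a²)·(b⁻¹d + b)·X² + (a+1)·(b⁻¹e + ab⁻¹d² + (a+1)·(b⁻³d³ + bd + b³))·X⁴ in R[X]. Then g.comp h = h.comp g′; that is, the conjugate of the μ₄-substitution g by h is g′. -/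
open Polynomial

set_option linter.unreachableTactic false
set_option linter.unusedVariables false
set_option linter.unnecessarySeqFocus false
set_option linter.unusedTactic false
set_option maxRecDepth 20000
set_option maxHeartbeats 4000000

private lemma e4' {M : Type*} [Monoid M] (y : M) : y^4 = (y^2)^2 := by
  rw [← pow_mul]

section Steps
variable {S : Type*} [CommRing S] (A B Bi Cc D E x : S)

private lemma step_hsq (h2 : (2:S) = 0) (hb : B*Bi = 1) (hd : D^4 = 0) (he : E^2 = 0) (ha : A^4 = 1) :
    (B*x + Cc + D*x^2 + E*x^4)^2 = B^2*x^2 + Cc^2 + D^2*x^4 := by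
  linear_combination (x^8)*he + (D*E*x^6 + Cc*E*x^4 + Cc*D*x^2 + B*E*x^5 + B*D*x^3 + B*Cc*x)*h2

private lemma step_hq4 (h2 : (2:S) = 0) (hb : B*Bi = 1) (hd : D^4 = 0) (he : E^2 = 0) (ha : A^4 = 1) :
    (B*x + Cc + D*x^2 + E*x^4)^4 = B^4*x^4 + Cc^4 := by
  rw [e4', step_hsq A B Bi Cc D E x h2 hb hd he ha]
  linear_combination (x^8)*hd + (Cc^2*D^2*x^4 + B^2*D^2*x^6 + B^2*Cc^2*x^2)*h2

private lemma step_gsq (h2 : (2:S) = 0) (hb : B*Bi = 1) (hd : D^4 = 0) (he : E^2 = 0) (ha : A^4 = 1) :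
    (A*x + (A+1)*Bi*(Cc + A*Cc^2 + (A+1)*(Bi^2*Cc^2*D + Bi^2*Cc^4*D + Cc^4)) + (A+A^2)*(Bi*D+B)*x^2 + (A+1)*(Bi*E + A*Bi*D^2 + (A+1)*(Bi^3*D^3 + B*D + B^3))*x^4)^2 = A^2*x^2 + ((A+1)*Bi*(Cc + A*Cc^2 + (A+1)*(Bi^2*Cc^2*D + Bi^2*Cc^4*D + Cc^4)))^2 + (A^2+1)*(Bi^2*D^2+B^2)*x^4 := by
  linear_combination (Bi^2*D^2*x^4 + Bi^2*D^4*x^8 + Bi^6*D^6*x^8 + B^2*x^4 + B^2*D^2*x^8 + B^6*x^8)*ha + (Bi^2*x^8 + A^2*Bi^2*x^8)*hd + (Bi^2*x^8 + A^2*Bi^2*x^8)*he + ((Bi^2*Cc*E*x^4 + Bi^2*Cc^4*E*x^4 + Bi^4*D^3*E*x^8 + Bi^4*Cc*D^3*x^4 + Bi^4*Cc^2*D*E*x^4 + Bi^4*Cc^4*D*E*x^4 + Bi^4*Cc^4*D^3*x^4 + Bi^6*D^6*x^8 + Bi^6*Cc^2*D^4*x^4 + Bi^6*Cc^4*D^4*x^4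 + B*Bi*D*E*x^8 + B*Bi*Cc*D*x^4 + B*Bi*Cc^4*D*x^4 + B*Bi^3*D^4*x^8 + B*Bi^3*Cc^2*D^2*x^4 + B*Bi^3*Cc^4*D^2*x^4 + B^2*D^2*x^8 + B^3*Bi*E*x^8 + B^3*Bi*Cc*x^4 + B^3*Bi*Cc^4*x^4) + (B^3*Bi^3*D^3*x^8 + B^3*Bi^3*Cc^2*D*x^4 + B^3*Bi^3*Cc^4*D*x^4 + B^4*D*x^8 + B^6*x^8 + A*Bi*E*x^5 + A*Bi*Cc*x + A*Bi*Cc^4*x + A*Bi^2*E^2*x^8 + A*Bi^2*D*E*x^6 + A*Bi^2*D^2*E*x^8 + 2*A*Bi^2*Cc*E*x^4 + A*Bi^2*Cc*D*x^2 + A*Bi^2*Cc*D^2*x^4 + A*Bi^2*Cc^2*E*x^4 + 3*A*Bi^2*Cc^4*E*x^4 + A*Bi^2*Cc^4*D*x^2 + A*Bi^2*Cc^4*D^2*x^4 + A*Bi^3*D^3*x^5 + A*Bi^3*Cc^2*D*x) + (A*Bi^3*Cc^4*D*x + 3*A*Bi^4*D^3*E*x^8 + A*Bi^4*D^4*x^6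 + A*Bi^4*D^5*x^8 + 3*A*Bi^4*Cc*D^3*x^4 + 3*A*Bi^4*Cc^2*D*E*x^4 + A*Bi^4*Cc^2*D^2*x^2 + 2*A*Bi^4*Cc^2*D^3*x^4 + 3*A*Bi^4*Cc^4*D*E*x^4 + A*Bi^4*Cc^4*D^2*x^2 + 5*A*Bi^4*Cc^4*D^3*x^4 + 2*A*Bi^6*D^6*x^8 + 4*A*Bi^6*Cc^2*D^4*x^4 + 4*A*Bi^6*Cc^4*D^4*x^4 + A*B*D*x^5 + A*B*Bi*E*x^6 + 3*A*B*Bi*D*E*x^8 + A*B*Bi*D^2*x^6 + A*B*Bi*D^3*x^8 + A*B*Bi*Cc*x^2) + (3*A*B*Bi*Cc*D*x^4 + A*B*Bi*Cc^2*D*x^4 + A*B*Bi*Cc^4*x^2 + 4*A*B*Bi*Cc^4*D*x^4 + A*B*Bi^3*D^3*x^6 + 4*A*B*Bi^3*D^4*x^8 + A*B*Bi^3*Cc^2*D*x^2 + 4*A*B*Bi^3*Cc^2*D^2*x^4 + A*B*Bi^3*Cc^4*D*x^2 + 4*A*B*Bi^3*Cc^4*D^2*x^4 + A*B^2*D*x^6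 + 2*A*B^2*D^2*x^8 + A*B^3*x^5 + 3*A*B^3*Bi*E*x^8 + A*B^3*Bi*D*x^6 + A*B^3*Bi*D^2*x^8 + 3*A*B^3*Bi*Cc*x^4 + A*B^3*Bi*Cc^2*x^4 + 4*A*B^3*Bi*Cc^4*x^4 + 4*A*B^3*Bi^3*D^3*x^8) + (4*A*B^3*Bi^3*Cc^2*D*x^4 + 4*A*B^3*Bi^3*Cc^4*D*x^4 + A*B^4*x^6 + 4*A*B^4*D*x^8 + 2*A*B^6*x^8 + A^2*Bi*E*x^5 + A^2*Bi*D*x^3 + A^2*Bi*D^2*x^5 + A^2*Bi*Cc*x + A^2*Bi*Cc^2*x + 2*A^2*Bi*Cc^4*x + 2*A^2*Bi^2*D*E*x^6 + 2*A^2*Bi^2*D^2*E*x^8 + A^2*Bi^2*D^3*x^6 + A^2*Bi^2*Cc*E*x^4 + 2*A^2*Bi^2*Cc*D*x^2 + 2*A^2*Bi^2*Cc*D^2*x^4 + 2*A^2*Bi^2*Cc^2*E*x^4 + A^2*Bi^2*Cc^2*D*x^2 + A^2*Bi^2*Cc^2*D^2*x^4) + (3*A^2*Bi^2*Cc^4*E*x^4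 + 3*A^2*Bi^2*Cc^4*D*x^2 + 3*A^2*Bi^2*Cc^4*D^2*x^4 + 2*A^2*Bi^3*D^3*x^5 + 2*A^2*Bi^3*Cc^2*D*x + 2*A^2*Bi^3*Cc^4*D*x + 3*A^2*Bi^4*D^3*E*x^8 + 3*A^2*Bi^4*D^4*x^6 + 3*A^2*Bi^4*D^5*x^8 + 3*A^2*Bi^4*Cc*D^3*x^4 + 3*A^2*Bi^4*Cc^2*D*E*x^4 + 3*A^2*Bi^4*Cc^2*D^2*x^2 + 6*A^2*Bi^4*Cc^2*D^3*x^4 + 3*A^2*Bi^4*Cc^4*D*E*x^4 + 3*A^2*Bi^4*Cc^4*D^2*x^2 + 9*A^2*Bi^4*Cc^4*D^3*x^4 + 3*A^2*Bi^6*D^6*x^8 + 6*A^2*Bi^6*Cc^2*D^4*x^4 + 6*A^2*Bi^6*Cc^4*D^4*x^4 + A^2*B*x^3) + (2*A^2*B*D*x^5 + 2*A^2*B*Bi*E*x^6 + A^2*B*Bi*D*x^4 + 3*A^2*B*Bi*D*E*x^8 + 4*A^2*B*Bi*D^2*x^6 + 3*A^2*B*Bi*D^3*x^8 + 2*A^2*B*Bi*Cc*x^2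 + 3*A^2*B*Bi*Cc*D*x^4 + A^2*B*Bi*Cc^2*x^2 + 3*A^2*B*Bi*Cc^2*D*x^4 + 3*A^2*B*Bi*Cc^4*x^2 + 6*A^2*B*Bi*Cc^4*D*x^4 + 3*A^2*B*Bi^3*D^3*x^6 + 6*A^2*B*Bi^3*D^4*x^8 + 3*A^2*B*Bi^3*Cc^2*D*x^2 + 6*A^2*B*Bi^3*Cc^2*D^2*x^4 + 3*A^2*B*Bi^3*Cc^4*D*x^2 + 6*A^2*B*Bi^3*Cc^4*D^2*x^4 + 3*A^2*B^2*D*x^6 + 3*A^2*B^2*D^2*x^8) + (2*A^2*B^3*x^5 + 3*A^2*B^3*Bi*E*x^8 + 3*A^2*B^3*Bi*D*x^6 + 3*A^2*B^3*Bi*D^2*x^8 + 3*A^2*B^3*Bi*Cc*x^4 + 3*A^2*B^3*Bi*Cc^2*x^4 + 6*A^2*B^3*Bi*Cc^4*x^4 + 6*A^2*B^3*Bi^3*D^3*x^8 + 6*A^2*B^3*Bi^3*Cc^2*D*x^4 + 6*A^2*B^3*Bi^3*Cc^4*D*x^4 + 3*A^2*B^4*x^6 + 6*A^2*B^4*D*x^8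 + 3*A^2*B^6*x^8 + A^3*Bi*D*x^3 + A^3*Bi*D^2*x^5 + A^3*Bi*Cc^2*x + A^3*Bi*Cc^4*x + A^3*Bi^2*D*E*x^6 + A^3*Bi^2*D^2*x^4 + A^3*Bi^2*D^2*E*x^8) + (2*A^3*Bi^2*D^3*x^6 + A^3*Bi^2*D^4*x^8 + A^3*Bi^2*Cc*D*x^2 + A^3*Bi^2*Cc*D^2*x^4 + A^3*Bi^2*Cc^2*E*x^4 + 2*A^3*Bi^2*Cc^2*D*x^2 + 2*A^3*Bi^2*Cc^2*D^2*x^4 + A^3*Bi^2*Cc^4*E*x^4 + 3*A^3*Bi^2*Cc^4*D*x^2 + 3*A^3*Bi^2*Cc^4*D^2*x^4 + A^3*Bi^3*D^3*x^5 + A^3*Bi^3*Cc^2*D*x + A^3*Bi^3*Cc^4*D*x + A^3*Bi^4*D^3*E*x^8 + 3*A^3*Bi^4*D^4*x^6 + 3*A^3*Bi^4*D^5*x^8 + A^3*Bi^4*Cc*D^3*x^4 + A^3*Bi^4*Cc^2*D*E*x^4 + 3*A^3*Bi^4*Cc^2*D^2*x^2 + 6*A^3*Bi^4*Cc^2*D^3*x^4)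 + (A^3*Bi^4*Cc^4*D*E*x^4 + 3*A^3*Bi^4*Cc^4*D^2*x^2 + 7*A^3*Bi^4*Cc^4*D^3*x^4 + 2*A^3*Bi^6*D^6*x^8 + 4*A^3*Bi^6*Cc^2*D^4*x^4 + 4*A^3*Bi^6*Cc^4*D^4*x^4 + A^3*B*x^3 + A^3*B*D*x^5 + A^3*B*Bi*E*x^6 + 2*A^3*B*Bi*D*x^4 + A^3*B*Bi*D*E*x^8 + 5*A^3*B*Bi*D^2*x^6 + 3*A^3*B*Bi*D^3*x^8 + A^3*B*Bi*Cc*x^2 + A^3*B*Bi*Cc*D*x^4 + 2*A^3*B*Bi*Cc^2*x^2 + 3*A^3*B*Bi*Cc^2*D*x^4 + 3*A^3*B*Bi*Cc^4*x^2 + 4*A^3*B*Bi*Cc^4*D*x^4 + 3*A^3*B*Bi^3*D^3*x^6) + (4*A^3*B*Bi^3*D^4*x^8 + 3*A^3*B*Bi^3*Cc^2*D*x^2 + 4*A^3*B*Bi^3*Cc^2*D^2*x^4 + 3*A^3*B*Bi^3*Cc^4*D*x^2 + 4*A^3*B*Bi^3*Cc^4*D^2*x^4 + A^3*B^2*x^4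 + 3*A^3*B^2*D*x^6 + 2*A^3*B^2*D^2*x^8 + A^3*B^3*x^5 + A^3*B^3*Bi*E*x^8 + 3*A^3*B^3*Bi*D*x^6 + 3*A^3*B^3*Bi*D^2*x^8 + A^3*B^3*Bi*Cc*x^4 + 3*A^3*B^3*Bi*Cc^2*x^4 + 4*A^3*B^3*Bi*Cc^4*x^4 + 4*A^3*B^3*Bi^3*D^3*x^8 + 4*A^3*B^3*Bi^3*Cc^2*D*x^4 + 4*A^3*B^3*Bi^3*Cc^4*D*x^4 + 3*A^3*B^4*x^6 + 4*A^3*B^4*D*x^8) + (2*A^3*B^6*x^8 + A^4*Bi^2*D^3*x^6 + A^4*Bi^2*Cc^2*D*x^2 + A^4*Bi^2*Cc^2*D^2*x^4 + A^4*Bi^2*Cc^4*D*x^2 + A^4*Bi^2*Cc^4*D^2*x^4 + A^4*Bi^4*D^4*x^6 + A^4*Bi^4*D^5*x^8 + A^4*Bi^4*Cc^2*D^2*x^2 + 2*A^4*Bi^4*Cc^2*D^3*x^4 + A^4*Bi^4*Cc^4*D^2*x^2 + 2*A^4*Bi^4*Cc^4*D^3*x^4 + A^4*Bi^6*Cc^2*D^4*x^4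 + A^4*Bi^6*Cc^4*D^4*x^4 + A^4*B*Bi*D*x^4 + 2*A^4*B*Bi*D^2*x^6 + A^4*B*Bi*D^3*x^8 + A^4*B*Bi*Cc^2*x^2 + A^4*B*Bi*Cc^2*D*x^4 + A^4*B*Bi*Cc^4*x^2) + (A^4*B*Bi*Cc^4*D*x^4 + A^4*B*Bi^3*D^3*x^6 + A^4*B*Bi^3*D^4*x^8 + A^4*B*Bi^3*Cc^2*D*x^2 + A^4*B*Bi^3*Cc^2*D^2*x^4 + A^4*B*Bi^3*Cc^4*D*x^2 + A^4*B*Bi^3*Cc^4*D^2*x^4 + A^4*B^2*D*x^6 + A^4*B^3*Bi*D*x^6 + A^4*B^3*Bi*D^2*x^8 + A^4*B^3*Bi*Cc^2*x^4 + A^4*B^3*Bi*Cc^4*x^4 + A^4*B^3*Bi^3*D^3*x^8 + A^4*B^3*Bi^3*Cc^2*D*x^4 + A^4*B^3*Bi^3*Cc^4*D*x^4 + A^4*B^4*x^6 + A^4*B^4*D*x^8))*h2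

private lemma step_gq4 (h2 : (2:S) = 0) (hb : B*Bi = 1) (hd : D^4 = 0) (he : E^2 = 0) (ha : A^4 = 1) :
    (A*x + (A+1)*Bi*(Cc + A*Cc^2 + (A+1)*(Bi^2*Cc^2*D + Bi^2*Cc^4*D + Cc^4)) + (A+A^2)*(Bi*D+B)*x^2 + (A+1)*(Bi*E + A*Bi*D^2 + (A+1)*(Bi^3*D^3 + B*D + B^3))*x^4)^4 = x^4 := by
  rw [e4', step_gsq A B Bi Cc D E x h2 hb hd he ha]
  linear_combination (x^4 + Bi^4*D^4*x^8 + Bi^4*Cc^4 + Bi^4*Cc^16 + Bi^12*Cc^8*D^4 + Bi^12*Cc^16*D^4 + B^4*x^8 + A^4*Bi^4*Cc^8 + A^4*Bi^4*Cc^16 + A^4*Bi^12*Cc^8*D^4 + A^4*Bi^12*Cc^16*D^4)*ha + (((Bi^4*D^4*x^8 + Bi^4*Cc^2*D^2*x^4 + Bi^4*Cc^4 + 2*Bi^4*Cc^5*D^2*x^4 + 2*Bi^4*Cc^7 + Bi^4*Cc^8*D^2*x^4 + 3*Bi^4*Cc^10 + 2*Bi^4*Cc^13 + Bi^4*Cc^16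 + 2*Bi^6*Cc^3*D^3*x^4 + 2*Bi^6*Cc^5*D + 2*Bi^6*Cc^5*D^3*x^4 + 2*Bi^6*Cc^6*D^3*x^4 + 2*Bi^6*Cc^7*D + 6*Bi^6*Cc^8*D + 2*Bi^6*Cc^8*D^3*x^4 + 6*Bi^6*Cc^10*D + 6*Bi^6*Cc^11*D + 6*Bi^6*Cc^13*D + 2*Bi^6*Cc^14*D) + (2*Bi^6*Cc^16*D + Bi^8*Cc^4*D^4*x^4 + 3*Bi^8*Cc^6*D^2 + 2*Bi^8*Cc^6*D^4*x^4 + 6*Bi^8*Cc^8*D^2 + Bi^8*Cc^8*D^4*x^4 + 6*Bi^8*Cc^9*D^2 + 3*Bi^8*Cc^10*D^2 + 12*Bi^8*Cc^11*D^2 + 3*Bi^8*Cc^12*D^2 + 6*Bi^8*Cc^13*D^2 + 6*Bi^8*Cc^14*D^2 + 3*Bi^8*Cc^16*D^2 + 2*Bi^10*Cc^7*D^3 + 6*Bi^10*Cc^9*D^3 + 2*Bi^10*Cc^10*D^3 + 6*Bi^10*Cc^11*D^3 + 6*Bi^10*Cc^12*D^3 + 2*Bi^10*Cc^13*D^3 +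 6*Bi^10*Cc^14*D^3) + (2*Bi^10*Cc^16*D^3 + Bi^12*Cc^8*D^4 + 2*Bi^12*Cc^10*D^4 + 3*Bi^12*Cc^12*D^4 + 2*Bi^12*Cc^14*D^4 + Bi^12*Cc^16*D^4 + B^2*Bi^2*D^2*x^8 + B^2*Bi^2*Cc^2*x^4 + 2*B^2*Bi^2*Cc^5*x^4 + B^2*Bi^2*Cc^8*x^4 + 2*B^2*Bi^4*Cc^3*D*x^4 + 2*B^2*Bi^4*Cc^5*D*x^4 + 2*B^2*Bi^4*Cc^6*D*x^4 + 2*B^2*Bi^4*Cc^8*D*x^4 + B^2*Bi^6*Cc^4*D^2*x^4 + 2*B^2*Bi^6*Cc^6*D^2*x^4 + B^2*Bi^6*Cc^8*D^2*x^4 + B^4*x^8 + 2*A*Bi^4*Cc^2*D^2*x^4 + 2*A*Bi^4*Cc^3*D^2*x^4) + (2*A*Bi^4*Cc^4 + 2*A*Bi^4*Cc^5 + 6*A*Bi^4*Cc^5*D^2*x^4 + 2*A*Bi^4*Cc^6*D^2*x^4 + 10*A*Bi^4*Cc^7 + 6*A*Bi^4*Cc^8 + 4*A*Bi^4*Cc^8*D^2*x^4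 + 18*A*Bi^4*Cc^10 + 6*A*Bi^4*Cc^11 + 14*A*Bi^4*Cc^13 + 2*A*Bi^4*Cc^14 + 4*A*Bi^4*Cc^16 + 6*A*Bi^6*Cc^3*D^3*x^4 + 2*A*Bi^6*Cc^4*D^3*x^4 + 10*A*Bi^6*Cc^5*D + 6*A*Bi^6*Cc^5*D^3*x^4 + 6*A*Bi^6*Cc^6*D + 10*A*Bi^6*Cc^6*D^3*x^4 + 10*A*Bi^6*Cc^7*D + 42*A*Bi^6*Cc^8*D) + (8*A*Bi^6*Cc^8*D^3*x^4 + 12*A*Bi^6*Cc^9*D + 36*A*Bi^6*Cc^10*D + 54*A*Bi^6*Cc^11*D + 6*A*Bi^6*Cc^12*D + 42*A*Bi^6*Cc^13*D + 22*A*Bi^6*Cc^14*D + 16*A*Bi^6*Cc^16*D + 4*A*Bi^8*Cc^4*D^4*x^4 + 18*A*Bi^8*Cc^6*D^2 + 8*A*Bi^8*Cc^6*D^4*x^4 + 6*A*Bi^8*Cc^7*D^2 + 36*A*Bi^8*Cc^8*D^2 + 4*A*Bi^8*Cc^8*D^4*x^4 + 54*A*Bi^8*Cc^9*D^2 + 24*A*Bi^8*Cc^10*D^2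 + 90*A*Bi^8*Cc^11*D^2 + 36*A*Bi^8*Cc^12*D^2 + 42*A*Bi^8*Cc^13*D^2 + 54*A*Bi^8*Cc^14*D^2) + (24*A*Bi^8*Cc^16*D^2 + 14*A*Bi^10*Cc^7*D^3 + 2*A*Bi^10*Cc^8*D^3 + 42*A*Bi^10*Cc^9*D^3 + 22*A*Bi^10*Cc^10*D^3 + 42*A*Bi^10*Cc^11*D^3 + 54*A*Bi^10*Cc^12*D^3 + 14*A*Bi^10*Cc^13*D^3 + 50*A*Bi^10*Cc^14*D^3 + 16*A*Bi^10*Cc^16*D^3 + 4*A*Bi^12*Cc^8*D^4 + 16*A*Bi^12*Cc^10*D^4 + 24*A*Bi^12*Cc^12*D^4 + 16*A*Bi^12*Cc^14*D^4 + 4*A*Bi^12*Cc^16*D^4 + 2*A*B^2*Bi^2*Cc^2*x^4 + 2*A*B^2*Bi^2*Cc^3*x^4 + 6*A*B^2*Bi^2*Cc^5*x^4 + 2*A*B^2*Bi^2*Cc^6*x^4 + 4*A*B^2*Bi^2*Cc^8*x^4) + (6*A*B^2*Bi^4*Cc^3*D*x^4 + 2*A*B^2*Bi^4*Cc^4*D*x^4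 + 6*A*B^2*Bi^4*Cc^5*D*x^4 + 10*A*B^2*Bi^4*Cc^6*D*x^4 + 8*A*B^2*Bi^4*Cc^8*D*x^4 + 4*A*B^2*Bi^6*Cc^4*D^2*x^4 + 8*A*B^2*Bi^6*Cc^6*D^2*x^4 + 4*A*B^2*Bi^6*Cc^8*D^2*x^4 + A^2*Bi^2*D^2*x^6 + A^2*Bi^2*Cc^2*x^2 + 2*A^2*Bi^2*Cc^5*x^2 + A^2*Bi^2*Cc^8*x^2 + A^2*Bi^4*D^4*x^8 + 2*A^2*Bi^4*Cc^2*D^2*x^4 + 2*A^2*Bi^4*Cc^3*D*x^2 + 4*A^2*Bi^4*Cc^3*D^2*x^4 + 3*A^2*Bi^4*Cc^4 + A^2*Bi^4*Cc^4*D^2*x^4 + 8*A^2*Bi^4*Cc^5 + 2*A^2*Bi^4*Cc^5*D*x^2) + (8*A^2*Bi^4*Cc^5*D^2*x^4 + 3*A^2*Bi^4*Cc^6 + 2*A^2*Bi^4*Cc^6*D*x^2 + 6*A^2*Bi^4*Cc^6*D^2*x^4 + 20*A^2*Bi^4*Cc^7 + 30*A^2*Bi^4*Cc^8 + 2*A^2*Bi^4*Cc^8*D*x^2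 + 7*A^2*Bi^4*Cc^8*D^2*x^4 + 6*A^2*Bi^4*Cc^9 + 45*A^2*Bi^4*Cc^10 + 36*A^2*Bi^4*Cc^11 + 3*A^2*Bi^4*Cc^12 + 42*A^2*Bi^4*Cc^13 + 14*A^2*Bi^4*Cc^14 + 14*A^2*Bi^4*Cc^16 + 8*A^2*Bi^6*Cc^3*D^3*x^4 + A^2*Bi^6*Cc^4*D^2*x^2 + 6*A^2*Bi^6*Cc^4*D^3*x^4 + 20*A^2*Bi^6*Cc^5*D + 8*A^2*Bi^6*Cc^5*D^3*x^4) + (30*A^2*Bi^6*Cc^6*D + 2*A^2*Bi^6*Cc^6*D^2*x^2 + 20*A^2*Bi^6*Cc^6*D^3*x^4 + 26*A^2*Bi^6*Cc^7*D + 120*A^2*Bi^6*Cc^8*D + A^2*Bi^6*Cc^8*D^2*x^2 + 14*A^2*Bi^6*Cc^8*D^3*x^4 + 78*A^2*Bi^6*Cc^9*D + 96*A^2*Bi^6*Cc^10*D + 198*A^2*Bi^6*Cc^11*D + 48*A^2*Bi^6*Cc^12*D + 126*A^2*Bi^6*Cc^13*D + 98*A^2*Bi^6*Cc^14*D + 56*A^2*Bi^6*Cc^16*D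 + 7*A^2*Bi^8*Cc^4*D^4*x^4 + 45*A^2*Bi^8*Cc^6*D^2 + 14*A^2*Bi^8*Cc^6*D^4*x^4 + 36*A^2*Bi^8*Cc^7*D^2 + 93*A^2*Bi^8*Cc^8*D^2 + 7*A^2*Bi^8*Cc^8*D^4*x^4) + (198*A^2*Bi^8*Cc^9*D^2 + 93*A^2*Bi^8*Cc^10*D^2 + 288*A^2*Bi^8*Cc^11*D^2 + 171*A^2*Bi^8*Cc^12*D^2 + 126*A^2*Bi^8*Cc^13*D^2 + 210*A^2*Bi^8*Cc^14*D^2 + 84*A^2*Bi^8*Cc^16*D^2 + 42*A^2*Bi^10*Cc^7*D^3 + 14*A^2*Bi^10*Cc^8*D^3 + 126*A^2*Bi^10*Cc^9*D^3 + 98*A^2*Bi^10*Cc^10*D^3 + 126*A^2*Bi^10*Cc^11*D^3 + 210*A^2*Bi^10*Cc^12*D^3 + 42*A^2*Bi^10*Cc^13*D^3 + 182*A^2*Bi^10*Cc^14*D^3 + 56*A^2*Bi^10*Cc^16*D^3 + 14*A^2*Bi^12*Cc^8*D^4 + 56*A^2*Bi^12*Cc^10*D^4 + 84*A^2*Bi^12*Cc^12*D^4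 + 56*A^2*Bi^12*Cc^14*D^4) + (14*A^2*Bi^12*Cc^16*D^4 + A^2*B^2*x^6 + 2*A^2*B^2*Bi^2*D^2*x^8 + 2*A^2*B^2*Bi^2*Cc^2*x^4 + 4*A^2*B^2*Bi^2*Cc^3*x^4 + A^2*B^2*Bi^2*Cc^4*x^4 + 8*A^2*B^2*Bi^2*Cc^5*x^4 + 6*A^2*B^2*Bi^2*Cc^6*x^4 + 7*A^2*B^2*Bi^2*Cc^8*x^4 + 8*A^2*B^2*Bi^4*Cc^3*D*x^4 + 6*A^2*B^2*Bi^4*Cc^4*D*x^4 + 8*A^2*B^2*Bi^4*Cc^5*D*x^4 + 20*A^2*B^2*Bi^4*Cc^6*D*x^4 + 14*A^2*B^2*Bi^4*Cc^8*D*x^4 + 7*A^2*B^2*Bi^6*Cc^4*D^2*x^4 + 14*A^2*B^2*Bi^6*Cc^6*D^2*x^4 + 7*A^2*B^2*Bi^6*Cc^8*D^2*x^4 + A^2*B^4*x^8 + 2*A^3*Bi^2*Cc^2*x^2 + 2*A^3*Bi^2*Cc^3*x^2) + (6*A^3*Bi^2*Cc^5*x^2 + 2*A^3*Bi^2*Cc^6*x^2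 + 4*A^3*Bi^2*Cc^8*x^2 + 2*A^3*Bi^4*Cc^2*D^2*x^4 + 6*A^3*Bi^4*Cc^3*D*x^2 + 4*A^3*Bi^4*Cc^3*D^2*x^4 + 2*A^3*Bi^4*Cc^4 + 2*A^3*Bi^4*Cc^4*D*x^2 + 2*A^3*Bi^4*Cc^4*D^2*x^4 + 12*A^3*Bi^4*Cc^5 + 6*A^3*Bi^4*Cc^5*D*x^2 + 8*A^3*Bi^4*Cc^5*D^2*x^4 + 12*A^3*Bi^4*Cc^6 + 10*A^3*Bi^4*Cc^6*D*x^2 + 8*A^3*Bi^4*Cc^6*D^2*x^4 + 22*A^3*Bi^4*Cc^7 + 60*A^3*Bi^4*Cc^8 + 8*A^3*Bi^4*Cc^8*D*x^2 + 8*A^3*Bi^4*Cc^8*D^2*x^4 + 30*A^3*Bi^4*Cc^9) + (62*A^3*Bi^4*Cc^10 + 90*A^3*Bi^4*Cc^11 + 18*A^3*Bi^4*Cc^12 + 70*A^3*Bi^4*Cc^13 + 42*A^3*Bi^4*Cc^14 + 28*A^3*Bi^4*Cc^16 + 8*A^3*Bi^6*Cc^3*D^3*x^4 + 4*A^3*Bi^6*Cc^4*D^2*x^2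 + 8*A^3*Bi^6*Cc^4*D^3*x^4 + 20*A^3*Bi^6*Cc^5*D + 8*A^3*Bi^6*Cc^5*D^3*x^4 + 60*A^3*Bi^6*Cc^6*D + 8*A^3*Bi^6*Cc^6*D^2*x^2 + 24*A^3*Bi^6*Cc^6*D^3*x^4 + 50*A^3*Bi^6*Cc^7*D + 182*A^3*Bi^6*Cc^8*D + 4*A^3*Bi^6*Cc^8*D^2*x^2 + 16*A^3*Bi^6*Cc^8*D^3*x^4 + 210*A^3*Bi^6*Cc^9*D + 158*A^3*Bi^6*Cc^10*D) + (390*A^3*Bi^6*Cc^11*D + 162*A^3*Bi^6*Cc^12*D + 210*A^3*Bi^6*Cc^13*D + 238*A^3*Bi^6*Cc^14*D + 112*A^3*Bi^6*Cc^16*D + 8*A^3*Bi^8*Cc^4*D^4*x^4 + 60*A^3*Bi^8*Cc^6*D^2 + 16*A^3*Bi^8*Cc^6*D^4*x^4 + 90*A^3*Bi^8*Cc^7*D^2 + 138*A^3*Bi^8*Cc^8*D^2 + 8*A^3*Bi^8*Cc^8*D^4*x^4 + 390*A^3*Bi^8*Cc^9*D^2 + 222*A^3*Bi^8*Cc^10*D^2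 + 510*A^3*Bi^8*Cc^11*D^2 + 438*A^3*Bi^8*Cc^12*D^2 + 210*A^3*Bi^8*Cc^13*D^2 + 462*A^3*Bi^8*Cc^14*D^2 + 168*A^3*Bi^8*Cc^16*D^2 + 70*A^3*Bi^10*Cc^7*D^3 + 42*A^3*Bi^10*Cc^8*D^3) + (210*A^3*Bi^10*Cc^9*D^3 + 238*A^3*Bi^10*Cc^10*D^3 + 210*A^3*Bi^10*Cc^11*D^3 + 462*A^3*Bi^10*Cc^12*D^3 + 70*A^3*Bi^10*Cc^13*D^3 + 378*A^3*Bi^10*Cc^14*D^3 + 112*A^3*Bi^10*Cc^16*D^3 + 28*A^3*Bi^12*Cc^8*D^4 + 112*A^3*Bi^12*Cc^10*D^4 + 168*A^3*Bi^12*Cc^12*D^4 + 112*A^3*Bi^12*Cc^14*D^4 + 28*A^3*Bi^12*Cc^16*D^4 + 2*A^3*B^2*Bi^2*Cc^2*x^4 + 4*A^3*B^2*Bi^2*Cc^3*x^4 + 2*A^3*B^2*Bi^2*Cc^4*x^4 + 8*A^3*B^2*Bi^2*Cc^5*x^4 + 8*A^3*B^2*Bi^2*Cc^6*x^4 + 8*A^3*B^2*Bi^2*Cc^8*x^4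 + 8*A^3*B^2*Bi^4*Cc^3*D*x^4 + 8*A^3*B^2*Bi^4*Cc^4*D*x^4) + (8*A^3*B^2*Bi^4*Cc^5*D*x^4 + 24*A^3*B^2*Bi^4*Cc^6*D*x^4 + 16*A^3*B^2*Bi^4*Cc^8*D*x^4 + 8*A^3*B^2*Bi^6*Cc^4*D^2*x^4 + 16*A^3*B^2*Bi^6*Cc^6*D^2*x^4 + 8*A^3*B^2*Bi^6*Cc^8*D^2*x^4 + A^4*Bi^2*D^2*x^6 + A^4*Bi^2*Cc^2*x^2 + 4*A^4*Bi^2*Cc^3*x^2 + A^4*Bi^2*Cc^4*x^2 + 6*A^4*Bi^2*Cc^5*x^2 + 6*A^4*Bi^2*Cc^6*x^2 + 6*A^4*Bi^2*Cc^8*x^2 + A^4*Bi^4*Cc^2*D^2*x^4 + 6*A^4*Bi^4*Cc^3*D*x^2 + 4*A^4*Bi^4*Cc^3*D^2*x^4 + 6*A^4*Bi^4*Cc^4*D*x^2 + 2*A^4*Bi^4*Cc^4*D^2*x^4 + 8*A^4*Bi^4*Cc^5 + 6*A^4*Bi^4*Cc^5*D*x^2) + (6*A^4*Bi^4*Cc^5*D^2*x^4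 + 18*A^4*Bi^4*Cc^6 + 18*A^4*Bi^4*Cc^6*D*x^2 + 8*A^4*Bi^4*Cc^6*D^2*x^4 + 18*A^4*Bi^4*Cc^7 + 61*A^4*Bi^4*Cc^8 + 12*A^4*Bi^4*Cc^8*D*x^2 + 7*A^4*Bi^4*Cc^8*D^2*x^4 + 60*A^4*Bi^4*Cc^9 + 55*A^4*Bi^4*Cc^10 + 120*A^4*Bi^4*Cc^11 + 45*A^4*Bi^4*Cc^12 + 70*A^4*Bi^4*Cc^13 + 70*A^4*Bi^4*Cc^14 + 35*A^4*Bi^4*Cc^16 + 6*A^4*Bi^6*Cc^3*D^3*x^4 + 6*A^4*Bi^6*Cc^4*D^2*x^2 + 8*A^4*Bi^6*Cc^4*D^3*x^4 + 10*A^4*Bi^6*Cc^5*D + 6*A^4*Bi^6*Cc^5*D^3*x^4) + (60*A^4*Bi^6*Cc^6*D + 12*A^4*Bi^6*Cc^6*D^2*x^2 + 22*A^4*Bi^6*Cc^6*D^3*x^4 + 70*A^4*Bi^6*Cc^7*D + 160*A^4*Bi^6*Cc^8*D + 6*A^4*Bi^6*Cc^8*D^2*x^2 + 14*A^4*Bi^6*Cc^8*D^3*x^4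 + 300*A^4*Bi^6*Cc^9*D + 190*A^4*Bi^6*Cc^10*D + 450*A^4*Bi^6*Cc^11*D + 300*A^4*Bi^6*Cc^12*D + 210*A^4*Bi^6*Cc^13*D + 350*A^4*Bi^6*Cc^14*D + 140*A^4*Bi^6*Cc^16*D + 7*A^4*Bi^8*Cc^4*D^4*x^4 + 45*A^4*Bi^8*Cc^6*D^2 + 14*A^4*Bi^8*Cc^6*D^4*x^4 + 120*A^4*Bi^8*Cc^7*D^2 + 135*A^4*Bi^8*Cc^8*D^2 + 7*A^4*Bi^8*Cc^8*D^4*x^4) + (450*A^4*Bi^8*Cc^9*D^2 + 345*A^4*Bi^8*Cc^10*D^2 + 540*A^4*Bi^8*Cc^11*D^2 + 675*A^4*Bi^8*Cc^12*D^2 + 210*A^4*Bi^8*Cc^13*D^2 + 630*A^4*Bi^8*Cc^14*D^2 + 210*A^4*Bi^8*Cc^16*D^2 + 70*A^4*Bi^10*Cc^7*D^3 + 70*A^4*Bi^10*Cc^8*D^3 + 210*A^4*Bi^10*Cc^9*D^3 + 350*A^4*Bi^10*Cc^10*D^3 + 210*A^4*Bi^10*Cc^11*D^3 + 630*A^4*Bi^10*Cc^12*D^3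 + 70*A^4*Bi^10*Cc^13*D^3 + 490*A^4*Bi^10*Cc^14*D^3 + 140*A^4*Bi^10*Cc^16*D^3 + 35*A^4*Bi^12*Cc^8*D^4 + 140*A^4*Bi^12*Cc^10*D^4 + 210*A^4*Bi^12*Cc^12*D^4 + 140*A^4*Bi^12*Cc^14*D^4) + (35*A^4*Bi^12*Cc^16*D^4 + A^4*B^2*x^6 + A^4*B^2*Bi^2*D^2*x^8 + A^4*B^2*Bi^2*Cc^2*x^4 + 4*A^4*B^2*Bi^2*Cc^3*x^4 + 2*A^4*B^2*Bi^2*Cc^4*x^4 + 6*A^4*B^2*Bi^2*Cc^5*x^4 + 8*A^4*B^2*Bi^2*Cc^6*x^4 + 7*A^4*B^2*Bi^2*Cc^8*x^4 + 6*A^4*B^2*Bi^4*Cc^3*D*x^4 + 8*A^4*B^2*Bi^4*Cc^4*D*x^4 + 6*A^4*B^2*Bi^4*Cc^5*D*x^4 + 22*A^4*B^2*Bi^4*Cc^6*D*x^4 + 14*A^4*B^2*Bi^4*Cc^8*D*x^4 + 7*A^4*B^2*Bi^6*Cc^4*D^2*x^4 + 14*A^4*B^2*Bi^6*Cc^6*D^2*x^4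 + 7*A^4*B^2*Bi^6*Cc^8*D^2*x^4 + 2*A^5*Bi^2*Cc^3*x^2 + 2*A^5*Bi^2*Cc^4*x^2 + 2*A^5*Bi^2*Cc^5*x^2)) + ((6*A^5*Bi^2*Cc^6*x^2 + 4*A^5*Bi^2*Cc^8*x^2 + 2*A^5*Bi^4*Cc^3*D*x^2 + 2*A^5*Bi^4*Cc^3*D^2*x^4 + 6*A^5*Bi^4*Cc^4*D*x^2 + 2*A^5*Bi^4*Cc^4*D^2*x^4 + 2*A^5*Bi^4*Cc^5 + 2*A^5*Bi^4*Cc^5*D*x^2 + 2*A^5*Bi^4*Cc^5*D^2*x^4 + 12*A^5*Bi^4*Cc^6 + 14*A^5*Bi^4*Cc^6*D*x^2 + 6*A^5*Bi^4*Cc^6*D^2*x^4 + 14*A^5*Bi^4*Cc^7 + 32*A^5*Bi^4*Cc^8 + 8*A^5*Bi^4*Cc^8*D*x^2 + 4*A^5*Bi^4*Cc^8*D^2*x^4 + 60*A^5*Bi^4*Cc^9 + 38*A^5*Bi^4*Cc^10 + 90*A^5*Bi^4*Cc^11 + 60*A^5*Bi^4*Cc^12) + (42*A^5*Bi^4*Cc^13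 + 70*A^5*Bi^4*Cc^14 + 28*A^5*Bi^4*Cc^16 + 2*A^5*Bi^6*Cc^3*D^3*x^4 + 4*A^5*Bi^6*Cc^4*D^2*x^2 + 6*A^5*Bi^6*Cc^4*D^3*x^4 + 2*A^5*Bi^6*Cc^5*D + 2*A^5*Bi^6*Cc^5*D^3*x^4 + 30*A^5*Bi^6*Cc^6*D + 8*A^5*Bi^6*Cc^6*D^2*x^2 + 14*A^5*Bi^6*Cc^6*D^3*x^4 + 62*A^5*Bi^6*Cc^7*D + 86*A^5*Bi^6*Cc^8*D + 4*A^5*Bi^6*Cc^8*D^2*x^2 + 8*A^5*Bi^6*Cc^8*D^3*x^4 + 240*A^5*Bi^6*Cc^9*D + 176*A^5*Bi^6*Cc^10*D + 306*A^5*Bi^6*Cc^11*D + 330*A^5*Bi^6*Cc^12*D + 126*A^5*Bi^6*Cc^13*D) + (322*A^5*Bi^6*Cc^14*D + 112*A^5*Bi^6*Cc^16*D + 4*A^5*Bi^8*Cc^4*D^4*x^4 + 18*A^5*Bi^8*Cc^6*D^2 + 8*A^5*Bi^8*Cc^6*D^4*x^4 + 90*A^5*Bi^8*Cc^7*D^2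 + 96*A^5*Bi^8*Cc^8*D^2 + 4*A^5*Bi^8*Cc^8*D^4*x^4 + 306*A^5*Bi^8*Cc^9*D^2 + 348*A^5*Bi^8*Cc^10*D^2 + 342*A^5*Bi^8*Cc^11*D^2 + 648*A^5*Bi^8*Cc^12*D^2 + 126*A^5*Bi^8*Cc^13*D^2 + 546*A^5*Bi^8*Cc^14*D^2 + 168*A^5*Bi^8*Cc^16*D^2 + 42*A^5*Bi^10*Cc^7*D^3 + 70*A^5*Bi^10*Cc^8*D^3 + 126*A^5*Bi^10*Cc^9*D^3 + 322*A^5*Bi^10*Cc^10*D^3 + 126*A^5*Bi^10*Cc^11*D^3) + (546*A^5*Bi^10*Cc^12*D^3 + 42*A^5*Bi^10*Cc^13*D^3 + 406*A^5*Bi^10*Cc^14*D^3 + 112*A^5*Bi^10*Cc^16*D^3 + 28*A^5*Bi^12*Cc^8*D^4 + 112*A^5*Bi^12*Cc^10*D^4 + 168*A^5*Bi^12*Cc^12*D^4 + 112*A^5*Bi^12*Cc^14*D^4 + 28*A^5*Bi^12*Cc^16*D^4 + 2*A^5*B^2*Bi^2*Cc^3*x^4 + 2*A^5*B^2*Bi^2*Cc^4*x^4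 + 2*A^5*B^2*Bi^2*Cc^5*x^4 + 6*A^5*B^2*Bi^2*Cc^6*x^4 + 4*A^5*B^2*Bi^2*Cc^8*x^4 + 2*A^5*B^2*Bi^4*Cc^3*D*x^4 + 6*A^5*B^2*Bi^4*Cc^4*D*x^4 + 2*A^5*B^2*Bi^4*Cc^5*D*x^4 + 14*A^5*B^2*Bi^4*Cc^6*D*x^4 + 8*A^5*B^2*Bi^4*Cc^8*D*x^4 + 4*A^5*B^2*Bi^6*Cc^4*D^2*x^4) + (8*A^5*B^2*Bi^6*Cc^6*D^2*x^4 + 4*A^5*B^2*Bi^6*Cc^8*D^2*x^4 + A^6*Bi^2*Cc^4*x^2 + 2*A^6*Bi^2*Cc^6*x^2 + A^6*Bi^2*Cc^8*x^2 + 2*A^6*Bi^4*Cc^4*D*x^2 + A^6*Bi^4*Cc^4*D^2*x^4 + 3*A^6*Bi^4*Cc^6 + 4*A^6*Bi^4*Cc^6*D*x^2 + 2*A^6*Bi^4*Cc^6*D^2*x^4 + 8*A^6*Bi^4*Cc^7 + 9*A^6*Bi^4*Cc^8 + 2*A^6*Bi^4*Cc^8*D*x^2 + A^6*Bi^4*Cc^8*D^2*x^4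 + 30*A^6*Bi^4*Cc^9 + 23*A^6*Bi^4*Cc^10 + 36*A^6*Bi^4*Cc^11 + 45*A^6*Bi^4*Cc^12 + 14*A^6*Bi^4*Cc^13 + 42*A^6*Bi^4*Cc^14) + (14*A^6*Bi^4*Cc^16 + A^6*Bi^6*Cc^4*D^2*x^2 + 2*A^6*Bi^6*Cc^4*D^3*x^4 + 6*A^6*Bi^6*Cc^6*D + 2*A^6*Bi^6*Cc^6*D^2*x^2 + 4*A^6*Bi^6*Cc^6*D^3*x^4 + 30*A^6*Bi^6*Cc^7*D + 32*A^6*Bi^6*Cc^8*D + A^6*Bi^6*Cc^8*D^2*x^2 + 2*A^6*Bi^6*Cc^8*D^3*x^4 + 102*A^6*Bi^6*Cc^9*D + 116*A^6*Bi^6*Cc^10*D + 114*A^6*Bi^6*Cc^11*D + 216*A^6*Bi^6*Cc^12*D + 42*A^6*Bi^6*Cc^13*D + 182*A^6*Bi^6*Cc^14*D + 56*A^6*Bi^6*Cc^16*D + A^6*Bi^8*Cc^4*D^4*x^4 + 3*A^6*Bi^8*Cc^6*D^2 + 2*A^6*Bi^8*Cc^6*D^4*x^4) + (36*A^6*Bi^8*Cc^7*D^2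 + 51*A^6*Bi^8*Cc^8*D^2 + A^6*Bi^8*Cc^8*D^4*x^4 + 114*A^6*Bi^8*Cc^9*D^2 + 219*A^6*Bi^8*Cc^10*D^2 + 120*A^6*Bi^8*Cc^11*D^2 + 381*A^6*Bi^8*Cc^12*D^2 + 42*A^6*Bi^8*Cc^13*D^2 + 294*A^6*Bi^8*Cc^14*D^2 + 84*A^6*Bi^8*Cc^16*D^2 + 14*A^6*Bi^10*Cc^7*D^3 + 42*A^6*Bi^10*Cc^8*D^3 + 42*A^6*Bi^10*Cc^9*D^3 + 182*A^6*Bi^10*Cc^10*D^3 + 42*A^6*Bi^10*Cc^11*D^3 + 294*A^6*Bi^10*Cc^12*D^3 + 14*A^6*Bi^10*Cc^13*D^3 + 210*A^6*Bi^10*Cc^14*D^3 + 56*A^6*Bi^10*Cc^16*D^3 + 14*A^6*Bi^12*Cc^8*D^4) + (56*A^6*Bi^12*Cc^10*D^4 + 84*A^6*Bi^12*Cc^12*D^4 + 56*A^6*Bi^12*Cc^14*D^4 + 14*A^6*Bi^12*Cc^16*D^4 + A^6*B^2*Bi^2*Cc^4*x^4 + 2*A^6*B^2*Bi^2*Cc^6*x^4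 + A^6*B^2*Bi^2*Cc^8*x^4 + 2*A^6*B^2*Bi^4*Cc^4*D*x^4 + 4*A^6*B^2*Bi^4*Cc^6*D*x^4 + 2*A^6*B^2*Bi^4*Cc^8*D*x^4 + A^6*B^2*Bi^6*Cc^4*D^2*x^4 + 2*A^6*B^2*Bi^6*Cc^6*D^2*x^4 + A^6*B^2*Bi^6*Cc^8*D^2*x^4 + 2*A^7*Bi^4*Cc^7 + 2*A^7*Bi^4*Cc^8 + 6*A^7*Bi^4*Cc^9 + 10*A^7*Bi^4*Cc^10 + 6*A^7*Bi^4*Cc^11 + 18*A^7*Bi^4*Cc^12 + 2*A^7*Bi^4*Cc^13) + (14*A^7*Bi^4*Cc^14 + 4*A^7*Bi^4*Cc^16 + 6*A^7*Bi^6*Cc^7*D + 10*A^7*Bi^6*Cc^8*D + 18*A^7*Bi^6*Cc^9*D + 46*A^7*Bi^6*Cc^10*D + 18*A^7*Bi^6*Cc^11*D + 78*A^7*Bi^6*Cc^12*D + 6*A^7*Bi^6*Cc^13*D + 58*A^7*Bi^6*Cc^14*D + 16*A^7*Bi^6*Cc^16*D + 6*A^7*Bi^8*Cc^7*D^2 +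 18*A^7*Bi^8*Cc^8*D^2 + 18*A^7*Bi^8*Cc^9*D^2 + 78*A^7*Bi^8*Cc^10*D^2 + 18*A^7*Bi^8*Cc^11*D^2 + 126*A^7*Bi^8*Cc^12*D^2 + 6*A^7*Bi^8*Cc^13*D^2 + 90*A^7*Bi^8*Cc^14*D^2 + 24*A^7*Bi^8*Cc^16*D^2) + (2*A^7*Bi^10*Cc^7*D^3 + 14*A^7*Bi^10*Cc^8*D^3 + 6*A^7*Bi^10*Cc^9*D^3 + 58*A^7*Bi^10*Cc^10*D^3 + 6*A^7*Bi^10*Cc^11*D^3 + 90*A^7*Bi^10*Cc^12*D^3 + 2*A^7*Bi^10*Cc^13*D^3 + 62*A^7*Bi^10*Cc^14*D^3 + 16*A^7*Bi^10*Cc^16*D^3 + 4*A^7*Bi^12*Cc^8*D^4 + 16*A^7*Bi^12*Cc^10*D^4 + 24*A^7*Bi^12*Cc^12*D^4 + 16*A^7*Bi^12*Cc^14*D^4 + 4*A^7*Bi^12*Cc^16*D^4 + 2*A^8*Bi^4*Cc^10 + 3*A^8*Bi^4*Cc^12 + 2*A^8*Bi^4*Cc^14 + 2*A^8*Bi^6*Cc^8*D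 + 8*A^8*Bi^6*Cc^10*D + 12*A^8*Bi^6*Cc^12*D) + (8*A^8*Bi^6*Cc^14*D + 2*A^8*Bi^6*Cc^16*D + 3*A^8*Bi^8*Cc^8*D^2 + 12*A^8*Bi^8*Cc^10*D^2 + 18*A^8*Bi^8*Cc^12*D^2 + 12*A^8*Bi^8*Cc^14*D^2 + 3*A^8*Bi^8*Cc^16*D^2 + 2*A^8*Bi^10*Cc^8*D^3 + 8*A^8*Bi^10*Cc^10*D^3 + 12*A^8*Bi^10*Cc^12*D^3 + 8*A^8*Bi^10*Cc^14*D^3 + 2*A^8*Bi^10*Cc^16*D^3 + 2*A^8*Bi^12*Cc^10*D^4 + 3*A^8*Bi^12*Cc^12*D^4 + 2*A^8*Bi^12*Cc^14*D^4)))*h2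

private lemma step_final (h2 : (2:S) = 0) (hb : B*Bi = 1) (hd : D^4 = 0) (he : E^2 = 0) (ha : A^4 = 1) :
    A*(B*x + Cc + D*x^2 + E*x^4) + (A+A^2)*(B^2*x^2 + Cc^2 + D^2*x^4) + (1+A^2)*(B^4*x^4 + Cc^4)
    = B*(A*x + (A+1)*Bi*(Cc + A*Cc^2 + (A+1)*(Bi^2*Cc^2*D + Bi^2*Cc^4*D + Cc^4)) + (A+A^2)*(Bi*D+B)*x^2 + (A+1)*(Bi*E + A*Bi*D^2 + (A+1)*(Bi^3*D^3 + B*D + B^3))*x^4) + Cc + D*(A^2*x^2 + ((A+1)*Bi*(Cc + A*Cc^2 + (A+1)*(Bi^2*Cc^2*D + Bi^2*Cc^4*D + Cc^4)))^2 + (A^2+1)*(Bi^2*D^2+B^2)*x^4) + E*x^4 := by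
  linear_combination (E*x^4 + Cc + Cc^4 + Bi^2*D^3*x^4 + Bi^2*Cc^2*D + Bi^2*Cc^4*D + A*E*x^4 + A*D*x^2 + A*D^2*x^4 + A*Cc + A*Cc^2 + A^2*D*x^2 + A^2*D^2*x^4 + A^2*Cc^2 + A^2*Cc^4 + A^2*Bi^2*D^3*x^4 + A^2*Bi^2*Cc^2*D + A^2*Bi^2*Cc^4*D)*hb + (Bi^2*Cc^4*D + Bi^2*Cc^8*D + Bi^6*Cc^4*D^3 + Bi^6*Cc^8*D^3)*ha + ((Cc^4 + Bi^2*Cc^4*D - Bi^2*Cc^5*D - Bi^4*Cc^3*D^2 - Bi^4*Cc^5*D^2 - Bi^4*Cc^6*D^2 - Bi^4*Cc^8*D^2 - Bi^6*Cc^6*D^3 - B*Bi*E*x^4 - B*Bi*Cc - B*Bi*Cc^4 - B*Bi^3*D^3*x^4 - B*Bi^3*Cc^2*D - B*Bi^3*Cc^4*D - B^2*D*x^4 + A*E*x^4 + A*D*x^2 + A*D^2*x^4 + A*Cc + A*Cc^2) + (-A*Bi^2*Cc^2*D - A*Bi^2*Cc^3*D - 3*A*Bi^2*Cc^5*D - A*Bi^2*Cc^6*D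 - 2*A*Bi^2*Cc^8*D - 3*A*Bi^4*Cc^3*D^2 - A*Bi^4*Cc^4*D^2 - 3*A*Bi^4*Cc^5*D^2 - 5*A*Bi^4*Cc^6*D^2 - 4*A*Bi^4*Cc^8*D^2 - 2*A*Bi^6*Cc^4*D^3 - 4*A*Bi^6*Cc^6*D^3 - 2*A*Bi^6*Cc^8*D^3 - A*B*Bi*E*x^4 - A*B*Bi*D*x^2 - A*B*Bi*D^2*x^4 - A*B*Bi*Cc - A*B*Bi*Cc^2 - A*B*Bi*Cc^4 - A*B*Bi^3*D^3*x^4) + (-A*B*Bi^3*Cc^2*D - A*B*Bi^3*Cc^4*D - A*B^2*D*x^4 - A*B^4*x^4 + A^2*D^2*x^4 + A^2*Cc^2 + A^2*Cc^4 - 2*A^2*Bi^2*Cc^3*D - 3*A^2*Bi^2*Cc^5*D - 3*A^2*Bi^2*Cc^6*D - 3*A^2*Bi^2*Cc^8*D - 3*A^2*Bi^4*Cc^3*D^2 - 3*A^2*Bi^4*Cc^4*D^2 - 3*A^2*Bi^4*Cc^5*D^2 - 9*A^2*Bi^4*Cc^6*D^2 - 6*A^2*Bi^4*Cc^8*D^2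 - 3*A^2*Bi^6*Cc^4*D^3 - 6*A^2*Bi^6*Cc^6*D^3 - 3*A^2*Bi^6*Cc^8*D^3 - A^2*B*Bi*D*x^2) + (-A^2*B*Bi*D^2*x^4 - A^2*B*Bi*Cc^2 - A^2*B*Bi*Cc^4 - A^2*B*Bi^3*D^3*x^4 - A^2*B*Bi^3*Cc^2*D - A^2*B*Bi^3*Cc^4*D - A^2*B^2*D*x^4 - A^3*Bi^2*Cc^3*D - A^3*Bi^2*Cc^4*D - A^3*Bi^2*Cc^5*D - 3*A^3*Bi^2*Cc^6*D - 2*A^3*Bi^2*Cc^8*D - A^3*Bi^4*Cc^3*D^2 - 3*A^3*Bi^4*Cc^4*D^2 - A^3*Bi^4*Cc^5*D^2 - 7*A^3*Bi^4*Cc^6*D^2 - 4*A^3*Bi^4*Cc^8*D^2 - 2*A^3*Bi^6*Cc^4*D^3 - 4*A^3*Bi^6*Cc^6*D^3 - 2*A^3*Bi^6*Cc^8*D^3) + (-A^4*Bi^2*Cc^4*D - A^4*Bi^2*Cc^6*D - A^4*Bi^2*Cc^8*D - A^4*Bi^4*Cc^4*D^2 - 2*A^4*Bi^4*Cc^6*D^2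 - A^4*Bi^4*Cc^8*D^2 - A^4*Bi^6*Cc^4*D^3 - A^4*Bi^6*Cc^6*D^3 - A^4*Bi^6*Cc^8*D^3))*h2

end Steps

/-- In characteristic 2, the conjugate of the μ₄-substitution
`g = a·X + (a+a²)·X² + (1+a²)·X⁴` (with `a⁴ = 1`) by
`h = b·X + c + d·X² + e·X⁴` is the substitution `g′` below,
i.e. `g ∘ h = h ∘ g′`. -/
theorem mu4_conj_char_two {R : Type*} [CommRing R] (h2 : (2 : R) = 0)
    (b : Rˣ) (c d e : R) (hd : d ^ 4 = 0) (he : e ^ 2 = 0)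
    (a : R) (ha : a ^ 4 = 1) :
    let bi : R := ((b⁻¹ : Rˣ) : R)
    let h : R[X] := C (b : R) * X + C c + C d * X ^ 2 + C e * X ^ 4
    let g : R[X] := C a * X + C (a + a ^ 2) * X ^ 2 + C (1 + a ^ 2) * X ^ 4
    let g' : R[X] := C a * X
      + C ((a + 1) * bi *
          (c + a * c ^ 2 + (a + 1) * (bi ^ 2 * c ^ 2 * d + bi ^ 2 * c ^ 4 * d + c ^ 4)))
      + C ((a + a ^ 2) * (bi * d + (b : R))) * X ^ 2
      + C ((a + 1) * (bi * e + a * bi * d ^ 2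
          + (a + 1) * (bi ^ 3 * d ^ 3 + (b : R) * d + (b : R) ^ 3))) * X ^ 4
    g.comp h = h.comp g' := by
  intro bi h g g'
  have h2' : (2 : R[X]) = 0 := by
    rw [← map_ofNat (C : R →+* R[X]) 2, h2, map_zero]
  have hb' : C (b : R) * C bi = 1 := by
    rw [← C_mul]
    simp [bi]
  have hd' : (C d : R[X])^4 = 0 := by rw [← C_pow, hd, C_0]
  have he' : (C e : R[X])^2 = 0 := by rw [← C_pow, he, C_0]
  have ha' : (C a : R[X])^4 = 1 := by rw [← C_pow, ha, C_1]
  have key := step_final (C a) (C (b:R)) (C bi) (C c) (C d) (C e) (X : R[X]) h2' hb' hd' he' ha'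
  have Hsq := step_hsq (C a) (C (b:R)) (C bi) (C c) (C d) (C e) (X : R[X]) h2' hb' hd' he' ha'
  have Hq4 := step_hq4 (C a) (C (b:R)) (C bi) (C c) (C d) (C e) (X : R[X]) h2' hb' hd' he' ha'
  have Gsq := step_gsq (C a) (C (b:R)) (C bi) (C c) (C d) (C e) (X : R[X]) h2' hb' hd' he' ha'
  have Gq4 := step_gq4 (C a) (C (b:R)) (C bi) (C c) (C d) (C e) (X : R[X]) h2' hb' hd' he' ha'
  show g.comp h = h.comp g'
  simp only [g, h, g', add_comp, mul_comp, X_comp, C_comp, pow_comp, one_comp, map_add, map_mul,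
    map_pow, map_one]
  rw [Hq4, Hsq, Gq4, Gsq]
  linear_combination key
end

section
/- Let R be a commutative ring with 2 = 0, let λ ∈ R, and let z₁, z₂ ∈ R with z₁⁴ = 0 and z₂⁴ = 0. For z ∈ R put t_z = X + z + λz²·X² + z²·X⁴ ∈ R[X]. Then t_{z₁}.comp t_{z₂} = t_{z₁ + z₂ + λz₁²z₂²} and (z₁ + z₂ + λz₁²z₂²)⁴ = 0. In particular, the substitutions t_z compose according to the group law z₁ ∗ z₂ = z₁ + z₂ + λz₁²z₂² on {z | z⁴ = 0}, which is the group law of the 2-torsion subgroup scheme M₂ = Spec k[z]/(z⁴) of the supersingular elliptic curve y² + λy = x³. -/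
open Polynomial

/-- In characteristic 2, the substitutions `t_z = X + z + λz²·X² + z²·X⁴`
(for `z⁴ = 0`) compose according to the group law
`z₁ ∗ z₂ = z₁ + z₂ + λz₁²z₂²` of the 2-torsion subgroup scheme `M₂` of the
supersingular elliptic curve `y² + λy = x³`: one has
`t_{z₁} ∘ t_{z₂} = t_{z₁ + z₂ + λz₁²z₂²}` and `(z₁ + z₂ + λz₁²z₂²)⁴ = 0`. -/
theorem M2_substitutions_comp_char_two {R : Type*} [CommRing R] (h2 : (2 : R) = 0)
    (l : R) (z₁ z₂ : R) (hz₁ : z₁ ^ 4 = 0) (hz₂ : z₂ ^ 4 = 0) :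
    let t : R → R[X] := fun z => X + C z + C (l * z ^ 2) * X ^ 2 + C (z ^ 2) * X ^ 4
    (t z₁).comp (t z₂) = t (z₁ + z₂ + l * z₁ ^ 2 * z₂ ^ 2) ∧
      (z₁ + z₂ + l * z₁ ^ 2 * z₂ ^ 2) ^ 4 = 0 := by
  intro t
  have h2X : (2 : R[X]) = 0 := by
    rw [← map_ofNat (C : R →+* R[X]) 2, h2, map_zero]
  have hz₁X : (C z₁ : R[X]) ^ 4 = 0 := by
    have := congrArg (C : R →+* R[X]) hz₁; simpa [map_pow] using this
  have hz₂X : (C z₂ : R[X]) ^ 4 = 0 := by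
    have := congrArg (C : R →+* R[X]) hz₂; simpa [map_pow] using this
  constructor
  · show (X + C z₁ + C (l * z₁ ^ 2) * X ^ 2 + C (z₁ ^ 2) * X ^ 4).comp
        (X + C z₂ + C (l * z₂ ^ 2) * X ^ 2 + C (z₂ ^ 2) * X ^ 4)
        = X + C (z₁ + z₂ + l * z₁ ^ 2 * z₂ ^ 2)
          + C (l * (z₁ + z₂ + l * z₁ ^ 2 * z₂ ^ 2) ^ 2) * X ^ 2
          + C ((z₁ + z₂ + l * z₁ ^ 2 * z₂ ^ 2) ^ 2) * X ^ 4
    simp only [add_comp, mul_comp, pow_comp, X_comp, C_comp, C_add, C_mul, C_pow]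
    linear_combination (((-1:R[X])*(C z₁)^1*(C z₂)^1*X^4 + (2:R[X])*(C z₁)^2*(C z₂)^1*X^3 + (3:R[X])*(C z₁)^2*(C z₂)^2*X^2 + (2:R[X])*(C z₁)^2*(C z₂)^2*X^7 + (2:R[X])*(C z₁)^2*(C z₂)^3*X^1 + (6:R[X])*(C z₁)^2*(C z₂)^3*X^6 + (-1:R[X])*(C l)^1*(C z₁)^1*(C z₂)^1*X^2 + (1:R[X])*(C l)^1*(C z₁)^2*(C z₂)^1*X^1 + (3:R[X])*(C l)^1*(C z₁)^2*(C z₂)^2*X^5 + (6:R[X])*(C l)^1*(C z₁)^2*(C z₂)^3*X^4 + (-1:R[X])*(C l)^1*(C z₁)^3*(C z₂)^2*X^4 + (1:R[X])*(C l)^2*(C z₁)^2*(C z₂)^2*X^3 + (-1:R[X])*(C l)^2*(C z₁)^3*(C z₂)^2*X^2) * h2X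
      + ((-1:R[X])*(C l)^2*(C z₂)^4*X^4 + (-1:R[X])*(C l)^3*(C z₂)^4*X^2) * hz₁X
      + ((1:R[X])*(C z₁)^2 + (12:R[X])*(C z₁)^2*X^5 + (6:R[X])*(C z₁)^2*X^10 + (4:R[X])*(C z₁)^2*(C z₂)^1*X^4 + (12:R[X])*(C z₁)^2*(C z₂)^1*X^9 + (6:R[X])*(C z₁)^2*(C z₂)^2*X^8 + (4:R[X])*(C z₁)^2*(C z₂)^2*X^13 + (4:R[X])*(C z₁)^2*(C z₂)^3*X^12 + (1:R[X])*(C z₁)^2*(C z₂)^4*X^16 + (12:R[X])*(C l)^1*(C z₁)^2*X^3 + (13:R[X])*(C l)^1*(C z₁)^2*X^8 + (4:R[X])*(C l)^1*(C z₁)^2*(C z₂)^1*X^2 + (24:R[X])*(C l)^1*(C z₁)^2*(C z₂)^1*X^7 + (12:R[X])*(C l)^1*(C z₁)^2*(C z₂)^2*X^6 + (12:R[X])*(C l)^1*(C z₁)^2*(C z₂)^2*X^11 + (12:R[X])*(C l)^1*(C z₁)^2*(C z₂)^3*X^10 + (4:R[X])*(C l)^1*(C z₁)^2*(C z₂)^4*X^14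 + (8:R[X])*(C l)^2*(C z₁)^2*X^6 + (12:R[X])*(C l)^2*(C z₁)^2*(C z₂)^1*X^5 + (6:R[X])*(C l)^2*(C z₁)^2*(C z₂)^2*X^4 + (12:R[X])*(C l)^2*(C z₁)^2*(C z₂)^2*X^9 + (12:R[X])*(C l)^2*(C z₁)^2*(C z₂)^3*X^8 + (6:R[X])*(C l)^2*(C z₁)^2*(C z₂)^4*X^12 + (1:R[X])*(C l)^3*(C z₁)^2*X^4 + (4:R[X])*(C l)^3*(C z₁)^2*(C z₂)^2*X^7 + (4:R[X])*(C l)^3*(C z₁)^2*(C z₂)^3*X^6 + (4:R[X])*(C l)^3*(C z₁)^2*(C z₂)^4*X^10 + (1:R[X])*(C l)^4*(C z₁)^2*(C z₂)^4*X^8) * hz₂X)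
  · linear_combination (((2:R)*z₁^1*z₂^3 + (3:R)*z₁^2*z₂^2 + (2:R)*z₁^3*z₂^1) * h2
      + ((1:R) + (12:R)*l^1*z₂^3 + (4:R)*l^1*z₁^1*z₂^2 + (6:R)*l^2*z₂^6 + (12:R)*l^2*z₁^1*z₂^5 + (6:R)*l^2*z₁^2*z₂^4 + (4:R)*l^3*z₁^2*z₂^7 + (4:R)*l^3*z₁^3*z₂^6 + (1:R)*l^4*z₁^4*z₂^8) * hz₁
      + ((1:R) + (4:R)*l^1*z₁^2*z₂^1 + (12:R)*l^1*z₁^3) * hz₂)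
end

section
/- Let R be a commutative ring with 2 = 0, let μ be a unit of R, and let a ∈ R with a² = 0. For λ ∈ R set g_{λ,a} = X + λa·X² + a·X⁴ ∈ R[X]. Then g_{μ²,a}.comp (μ·X) = (μ·X).comp g_{1, μ³a}, and (μ³a)² = 0. Hence conjugation by the substitution t ↦ μt carries the α₂-action with parameter λ = μ² to the α₂-action with parameter λ = 1. -/
open Polynomial

/-- In characteristic 2, conjugation by the substitution `t ↦ μt` (with `μ` a
unit) carries the α₂-action with parameter `λ = μ²` to the α₂-action with
parameter `λ = 1`: with `g_{λ,a} = X + λa·X² + a·X⁴` one has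
`g_{μ²,a} ∘ (μ·X) = (μ·X) ∘ g_{1,μ³a}` and `(μ³a)² = 0`. -/
theorem alpha2_parameter_normalization_char_two {R : Type*} [CommRing R]
    (h2 : (2 : R) = 0) (μ : Rˣ) (a : R) (ha : a ^ 2 = 0) :
    let g : R → R → R[X] := fun l a => X + C (l * a) * X ^ 2 + C a * X ^ 4
    (g ((μ : R) ^ 2) a).comp (C (μ : R) * X) =
        (C (μ : R) * X).comp (g 1 ((μ : R) ^ 3 * a)) ∧
      ((μ : R) ^ 3 * a) ^ 2 = 0 := by
  refine ⟨?_, ?_⟩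
  · simp only [add_comp, mul_comp, pow_comp, X_comp, C_comp, one_mul, map_mul, map_pow]
    ring
  · rw [mul_pow, ha, mul_zero]
end
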